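/- arXiv:1910.02415 — 2 statements merged into one kernel-verified Lean document; each statement's English description precedes it below -/
import Mathlib

section
/- For every connected unicyclic graph G on n ≥ 3 vertices, M_1(G) ≤ M_1(U_n^3) = n^2 - n + 6, with equality if and only if G ≅ U_n^3. -/
open scoped Classical
noncomputable def M1 {V : Type*} [Fintype V] (G : SimpleGraph V) : ℕ :=
  ∑ v, G.degree v ^ 2
noncomputable def M2 {V : Type*} [Fintype V] (G : SimpleGraph V) : ℕ :=
  ∑ e ∈ G.edgeFinset,
    Sym2.lift ⟨fun u v => G.degree u * G.degree v, fun _ _ => Nat.mul_comm _ _⟩ e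
noncomputable def numEdges {V : Type*} [Fintype V] (G : SimpleGraph V) : ℕ :=
  G.edgeFinset.card
def IsKCyclic {V : Type*} [Fintype V] (k : ℕ) (G : SimpleGraph V) : Prop :=
  G.Connected ∧ G.edgeFinset.card + 1 = Fintype.card V + k
def starGraph (n : ℕ) : SimpleGraph (Fin n) :=
  { Adj := fun u v => u ≠ v ∧ (u.val = 0 ∨ v.val = 0)
    symm := ⟨by intro u v h; exact ⟨h.1.symm, h.2.symm⟩⟩
    loopless := ⟨by intro u h; exact h.1 rfl⟩ }
def joinG {α β : Type*} (G : SimpleGraph α) (H : SimpleGraph β) : SimpleGraph (α ⊕ β) :=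
  { Adj := fun u v =>
      match u, v with
      | Sum.inl a, Sum.inl b => G.Adj a b
      | Sum.inr a, Sum.inr b => H.Adj a b
      | Sum.inl _, Sum.inr _ => True
      | Sum.inr _, Sum.inl _ => True
    symm := ⟨by
      intro u v h
      cases u <;> cases v <;> simp_all [SimpleGraph.adj_comm]⟩
    loopless := ⟨by
      intro u h
      cases u <;> simp_all⟩ }
noncomputable def deleteS {V : Type*} [Fintype V] (G : SimpleGraph V) (S : Finset V) :
    SimpleGraph ↥((↑S : Set V)ᶜ) :=
  G.induce ((↑S : Set V)ᶜ)
def QuasiKCyclic {V : Type*} [Fintype V] (k p : ℕ) (G : SimpleGraph V) : Prop :=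
  G.Connected ∧
  (∃ S : Finset V, S.card = p ∧ IsKCyclic k (deleteS G S)) ∧
  ∀ S' : Finset V, IsKCyclic k (deleteS G S') → p ≤ S'.card
def Un3 (n : ℕ) : SimpleGraph (Fin n) :=
  { Adj := fun u v => u ≠ v ∧ (u.val = 0 ∨ v.val = 0 ∨ (u.val ≤ 2 ∧ v.val ≤ 2))
    symm := ⟨by intro u v h; tauto⟩
    loopless := ⟨by intro u h; exact h.1 rfl⟩ }
def Bn33 (n : ℕ) : SimpleGraph (Fin n) :=
  { Adj := fun u v => u ≠ v ∧ (u.val = 0 ∨ v.val = 0 ∨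
      (1 ≤ u.val ∧ u.val ≤ 2 ∧ 1 ≤ v.val ∧ v.val ≤ 2) ∨
      (3 ≤ u.val ∧ u.val ≤ 4 ∧ 3 ≤ v.val ∧ v.val ≤ 4))
    symm := ⟨by intro u v h; tauto⟩
    loopless := ⟨by intro u h; exact h.1 rfl⟩ }


section ZagrebAux
set_option maxHeartbeats 1000000
open Finset

lemma un3_adj {n : ℕ} {u v : Fin n} :
    (Un3 n).Adj u v ↔ u ≠ v ∧ (u.val = 0 ∨ v.val = 0 ∨ (u.val ≤ 2 ∧ v.val ≤ 2)) := Iff.rfl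

lemma fin_ne_iff {n : ℕ} {u v : Fin n} : u ≠ v ↔ u.val ≠ v.val := by
  simp [Fin.ext_iff]

lemma un3_degree {n : ℕ} (hn : 3 ≤ n) (v : Fin n) :
    (Un3 n).degree v = if v.val = 0 then n - 1 else if v.val ≤ 2 then 2 else 1 := by
  classical
  have h0 : (0:ℕ) < n := by omega
  have h1 : (1:ℕ) < n := by omega
  have h2 : (2:ℕ) < n := by omega
  rw [SimpleGraph.degree, SimpleGraph.neighborFinset_eq_filter]
  by_cases hv0 : v.val = 0
  · have he : (univ.filter ((Un3 n).Adj v)) = univ.erase v := by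
      ext w
      simp only [mem_filter, mem_univ, true_and, mem_erase, un3_adj, fin_ne_iff, and_true]
      omega
    rw [he, card_erase_of_mem (mem_univ v), card_univ, Fintype.card_fin, if_pos hv0]
  · by_cases hv2 : v.val ≤ 2
    · rw [if_neg hv0, if_pos hv2]
      have he : (univ.filter ((Un3 n).Adj v)) =
          ({⟨0, h0⟩, ⟨1, h1⟩, ⟨2, h2⟩} : Finset (Fin n)).erase v := by
        ext w
        simp only [mem_filter, mem_univ, true_and, mem_erase, mem_insert, mem_singleton,
          un3_adj, fin_ne_iff, Fin.ext_iff]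
        omega
      rw [he, card_erase_of_mem, card_insert_of_notMem, card_insert_of_notMem,
        card_singleton]
      · simp [Fin.ext_iff]
      · simp [Fin.ext_iff]
      · simp only [mem_insert, mem_singleton, Fin.ext_iff]
        omega
    · rw [if_neg hv0, if_neg hv2]
      have he : (univ.filter ((Un3 n).Adj v)) = {⟨0, h0⟩} := by
        ext w
        simp only [mem_filter, mem_univ, true_and, mem_singleton, un3_adj, fin_ne_iff,
          Fin.ext_iff]
        omega
      rw [he, card_singleton]

lemma M1_un3 {n : ℕ} (hn : 3 ≤ n) : M1 (Un3 n) = n ^ 2 - n + 6 := by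
  classical
  obtain ⟨m, rfl⟩ : ∃ m, n = m + 3 := ⟨n - 3, by omega⟩
  have : M1 (Un3 (m+3)) = ∑ k ∈ Finset.range (m+3),
      (if k = 0 then m + 2 else if k ≤ 2 then 2 else 1) ^ 2 := by
    rw [M1, ← Fin.sum_univ_eq_sum_range]
    refine Finset.sum_congr rfl fun v _ => ?_
    rw [un3_degree hn]
    norm_num
  rw [this]
  have hsplit : ∑ k ∈ Finset.range (m+3),
      (if k = 0 then m + 2 else if k ≤ 2 then 2 else 1) ^ 2
      = ((m+2)^2 + 4 + 4) + ∑ k ∈ Finset.Ico 3 (m+3), 1 := by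
    have t1 : ∑ k ∈ Finset.Ico 0 3,
        (if k = 0 then m + 2 else if k ≤ 2 then 2 else 1) ^ 2 = (m+2)^2 + 4 + 4 := by
      rw [← Finset.range_eq_Ico, Finset.sum_range_succ, Finset.sum_range_succ,
        Finset.sum_range_one]
      norm_num
    have t2 : ∑ k ∈ Finset.Ico 3 (m+3),
        (if k = 0 then m + 2 else if k ≤ 2 then 2 else 1) ^ 2
        = ∑ k ∈ Finset.Ico 3 (m+3), 1 :=
      Finset.sum_congr rfl fun k hk => by
        rw [Finset.mem_Ico] at hk
        rw [if_neg (by omega), if_neg (by omega), one_pow]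
    rw [Finset.range_eq_Ico, ← Finset.sum_Ico_consecutive _ (by omega : 0 ≤ 3)
      (by omega : 3 ≤ m+3), t1, t2]
  rw [hsplit, Finset.sum_const, Nat.card_Ico, smul_eq_mul, mul_one]
  have e1 : (m+2)^2 = m*m + 4*m + 4 := by ring
  have e2 : (m+3)^2 = m*m + 6*m + 9 := by ring
  rw [e1, e2]
  generalize m*m = q
  omega

lemma iso_degree {V W : Type*} [Fintype V] [Fintype W] {G : SimpleGraph V}
    {H : SimpleGraph W} (f : G ≃g H) (v : V) : G.degree v = H.degree (f v) := by
  classical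
  rw [← SimpleGraph.card_neighborSet_eq_degree, ← SimpleGraph.card_neighborSet_eq_degree]
  exact Fintype.card_congr (f.mapNeighborSet v)

lemma M1_iso {V W : Type*} [Fintype V] [Fintype W] {G : SimpleGraph V}
    {H : SimpleGraph W} (f : G ≃g H) : M1 G = M1 H := by
  classical
  unfold M1
  rw [← Equiv.sum_comp f.toEquiv (fun w => H.degree w ^ 2)]
  exact Finset.sum_congr rfl fun v _ => by rw [iso_degree f]; rfl


variable {V : Type*} [Fintype V] {n : ℕ}

lemma degree_pos' (G : SimpleGraph V) (hconn : G.Connected) (h2 : 2 ≤ Fintype.card V)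
    (v : V) : 0 < G.degree v := by
  classical
  obtain ⟨w, hw⟩ := Fintype.exists_ne_of_one_lt_card (by omega) v
  obtain ⟨p⟩ := hconn.preconnected v w
  cases p with
  | nil => exact absurd rfl hw.symm
  | cons h _ => exact (SimpleGraph.degree_pos_iff_exists_adj G v).mpr ⟨_, h⟩

lemma hedges_bound (G : SimpleGraph V) (u : V) {v : V} (hvu : v ≠ u) :
    G.degree v ≤ (G.edgeFinset.filter (fun e => u ∉ e)).card + 1 := by
  classical
  set F := G.edgeFinset.filter (fun e => u ∉ e) with hF
  have hsub : G.neighborFinset v ⊆ insert u ((G.neighborFinset v).erase u) := by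
    intro a ha
    by_cases h : a = u
    · rw [h]; exact mem_insert_self u _
    · exact mem_insert_of_mem (mem_erase.mpr ⟨h, ha⟩)
  have h1 : ((G.neighborFinset v).erase u).card ≤ F.card := by
    apply Finset.card_le_card_of_injOn (fun w => s(v, w))
    · intro w hw
      beta_reduce
      rw [Finset.mem_coe, mem_erase, SimpleGraph.mem_neighborFinset] at hw
      rw [Finset.mem_coe, hF, mem_filter, SimpleGraph.mem_edgeFinset]
      refine ⟨hw.2, ?_⟩
      rw [Sym2.mem_iff]
      push_neg
      exact ⟨fun h => hvu h.symm, fun h => hw.1 h.symm⟩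
    · intro w _ w' _ h
      simpa using Sym2.congr_right.mp h
  calc G.degree v = (G.neighborFinset v).card := rfl
    _ ≤ (insert u ((G.neighborFinset v).erase u)).card := card_le_card hsub
    _ ≤ ((G.neighborFinset v).erase u).card + 1 := card_insert_le _ _
    _ ≤ F.card + 1 := by omega


lemma hedges_card' (G : SimpleGraph V) (u : V) :
    (G.edgeFinset.filter (fun e => u ∉ e)).card + G.degree u = G.edgeFinset.card := by
  classical
  have h := Finset.card_filter_add_card_filter_not
    (s := G.edgeFinset) (p := fun e => u ∈ e)
  have h2 : (G.edgeFinset.filter (fun e => u ∈ e)).card = G.degree u := by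
    rw [← SimpleGraph.incidenceFinset_eq_filter, SimpleGraph.card_incidenceFinset_eq_degree]
  omega

lemma iso_of_max_degree (G : SimpleGraph V) (hn : 3 ≤ n) (hcard : Fintype.card V = n)
    (huni : G.edgeFinset.card = n) (u : V) (hu : G.degree u = n - 1) :
    Nonempty (G ≃g Un3 n) := by
  classical
  -- u is adjacent to everything else
  have hadj_u : ∀ v, v ≠ u → G.Adj u v := by
    have hsub : G.neighborFinset u ⊆ univ.erase u := fun w hw => by
      rw [mem_erase]
      exact ⟨fun h => G.loopless.irrefl u (h ▸ (SimpleGraph.mem_neighborFinset G u w).mp hw), mem_univ w⟩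
    have hcards : (univ.erase u).card ≤ (G.neighborFinset u).card := by
      rw [card_erase_of_mem (mem_univ u), card_univ, hcard,
        SimpleGraph.card_neighborFinset_eq_degree, hu]
    have heq := Finset.eq_of_subset_of_card_le hsub hcards
    intro v hv
    have : v ∈ G.neighborFinset u := by
      rw [heq, mem_erase]; exact ⟨hv, mem_univ v⟩
    exact (SimpleGraph.mem_neighborFinset G u v).mp this
  -- exactly one edge avoiding u
  have hFcard : (G.edgeFinset.filter (fun e => u ∉ e)).card = 1 := by
    have := hedges_card' G u
    omega
  obtain ⟨e₀, he₀⟩ := Finset.card_eq_one.mp hFcard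
  have he₀mem : e₀ ∈ G.edgeFinset ∧ u ∉ e₀ := by
    have : e₀ ∈ G.edgeFinset.filter (fun e => u ∉ e) := he₀ ▸ mem_singleton_self e₀
    exact mem_filter.mp this |>.imp id id
  obtain ⟨x, y⟩ := e₀
  have hxy : G.Adj x y := SimpleGraph.mem_edgeFinset.mp he₀mem.1
  have hxu : x ≠ u := fun h => he₀mem.2 (h ▸ Sym2.mem_mk_left x y)
  have hyu : y ≠ u := fun h => he₀mem.2 (h ▸ Sym2.mem_mk_right x y)
  have hxyne : x ≠ y := hxy.ne
  -- adjacency characterization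
  have hchar : ∀ a c : V, G.Adj a c ↔
      a ≠ c ∧ (a = u ∨ c = u ∨ ((a = x ∧ c = y) ∨ (a = y ∧ c = x))) := by
    intro a c
    constructor
    · intro h
      refine ⟨h.ne, ?_⟩
      by_cases hau : a = u
      · exact Or.inl hau
      by_cases hcu : c = u
      · exact Or.inr (Or.inl hcu)
      right; right
      have hm : s(a, c) ∈ G.edgeFinset.filter (fun e => u ∉ e) := by
        rw [mem_filter, SimpleGraph.mem_edgeFinset]
        refine ⟨h, ?_⟩
        rw [Sym2.mem_iff]
        push_neg
        exact ⟨fun hh => hau hh.symm, fun hh => hcu hh.symm⟩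
      rw [he₀, mem_singleton] at hm
      rw [Sym2.eq_iff] at hm
      tauto
    · rintro ⟨hne, h | h | ⟨rfl, rfl⟩ | ⟨rfl, rfl⟩⟩
      · exact h ▸ hadj_u c fun hh => hne (h ▸ hh.symm)
      · exact (h ▸ hadj_u a fun hh => hne (h ▸ hh)).symm
      · exact hxy
      · exact hxy.symm
  -- build the equivalence
  have h0n : (0:ℕ) < n := by omega
  have h1n : (1:ℕ) < n := by omega
  have h2n : (2:ℕ) < n := by omega
  set z0 : Fin n := ⟨0, h0n⟩
  set z1 : Fin n := ⟨1, h1n⟩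
  set z2 : Fin n := ⟨2, h2n⟩
  have hz01 : z0 ≠ z1 := by simp [z0, z1, Fin.ext_iff]
  have hz02 : z0 ≠ z2 := by simp [z0, z2, Fin.ext_iff]
  have hz12 : z1 ≠ z2 := by simp [z1, z2, Fin.ext_iff]
  obtain ⟨φ, hφu, hφx, hφy⟩ : ∃ φ : V ≃ Fin n, φ u = z0 ∧ φ x = z1 ∧ φ y = z2 := by
    let e : V ≃ Fin n := Fintype.equivFinOfCardEq hcard
    let f1 := Equiv.swap (e u) z0
    let φ₁ := e.trans f1
    have hφ₁u : φ₁ u = z0 := Equiv.swap_apply_left _ _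
    let f2 := Equiv.swap (φ₁ x) z1
    let φ₂ := φ₁.trans f2
    have hx0 : φ₁ x ≠ z0 := fun h => hxu (φ₁.injective (h.trans hφ₁u.symm))
    have hφ₂u : φ₂ u = z0 := by
      show f2 (φ₁ u) = z0
      rw [hφ₁u]
      exact Equiv.swap_apply_of_ne_of_ne (Ne.symm hx0) hz01
    have hφ₂x : φ₂ x = z1 := Equiv.swap_apply_left _ _
    let f3 := Equiv.swap (φ₂ y) z2
    have hy0 : φ₂ y ≠ z0 := fun h => hyu (φ₂.injective (h.trans hφ₂u.symm))
    have hy1 : φ₂ y ≠ z1 := fun h => hxyne (φ₂.injective (h.trans hφ₂x.symm)).symm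
    refine ⟨φ₂.trans f3, ?_, ?_, Equiv.swap_apply_left _ _⟩
    · show f3 (φ₂ u) = z0
      rw [hφ₂u]
      exact Equiv.swap_apply_of_ne_of_ne (Ne.symm hy0) hz02
    · show f3 (φ₂ x) = z1
      rw [hφ₂x]
      exact Equiv.swap_apply_of_ne_of_ne (Ne.symm hy1) hz12
  -- value characterizations
  have hv0 : ∀ a : V, (φ a).val = 0 ↔ a = u := by
    intro a
    rw [show ((φ a).val = 0 ↔ φ a = z0) from by simp [z0, Fin.ext_iff], ← hφu,
      φ.injective.eq_iff]
  have hv1 : ∀ a : V, (φ a).val = 1 ↔ a = x := by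
    intro a
    rw [show ((φ a).val = 1 ↔ φ a = z1) from by simp [z1, Fin.ext_iff], ← hφx,
      φ.injective.eq_iff]
  have hv2 : ∀ a : V, (φ a).val = 2 ↔ a = y := by
    intro a
    rw [show ((φ a).val = 2 ↔ φ a = z2) from by simp [z2, Fin.ext_iff], ← hφy,
      φ.injective.eq_iff]
  refine ⟨⟨φ, ?_⟩⟩
  intro a c
  show (Un3 n).Adj (φ a) (φ c) ↔ G.Adj a c
  rw [hchar a c]
  have hne : φ a ≠ φ c ↔ a ≠ c := by rw [ne_eq, φ.injective.eq_iff]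
  constructor
  · rintro ⟨h1, h2⟩
    refine ⟨hne.mp h1, ?_⟩
    have hac : a ≠ c := hne.mp h1
    rcases h2 with h | h | ⟨ha, hc⟩
    · exact Or.inl ((hv0 a).mp h)
    · exact Or.inr (Or.inl ((hv0 c).mp h))
    · by_cases hau : a = u
      · exact Or.inl hau
      by_cases hcu : c = u
      · exact Or.inr (Or.inl hcu)
      right; right
      have ha' : a = x ∨ a = y := by
        rcases (by omega : (φ a).val = 0 ∨ (φ a).val = 1 ∨ (φ a).val = 2) with h | h | h
        · exact absurd ((hv0 a).mp h) hau
        · exact Or.inl ((hv1 a).mp h)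
        · exact Or.inr ((hv2 a).mp h)
      have hc' : c = x ∨ c = y := by
        rcases (by omega : (φ c).val = 0 ∨ (φ c).val = 1 ∨ (φ c).val = 2) with h | h | h
        · exact absurd ((hv0 c).mp h) hcu
        · exact Or.inl ((hv1 c).mp h)
        · exact Or.inr ((hv2 c).mp h)
      rcases ha' with rfl | rfl <;> rcases hc' with rfl | rfl <;> tauto
  · rintro ⟨h1, h2⟩
    refine ⟨hne.mpr h1, ?_⟩
    rcases h2 with rfl | rfl | ⟨rfl, rfl⟩ | ⟨rfl, rfl⟩
    · exact Or.inl (by rw [hφu])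
    · exact Or.inr (Or.inl (by rw [hφu]))
    · exact Or.inr (Or.inr ⟨by simp [hφx, z1], by simp [hφy, z2]⟩)
    · exact Or.inr (Or.inr ⟨by simp [hφy, z2], by simp [hφx, z1]⟩)

lemma main_bound (G : SimpleGraph V) (hn : 3 ≤ n) (hcard : Fintype.card V = n)
    (hconn : G.Connected) (huni : G.edgeFinset.card = n) :
    (∃ u, G.degree u = n - 1) ∨ M1 G < n ^ 2 - n + 6 := by
  classical
  have hdeg1 : ∀ v : V, 1 ≤ G.degree v := fun v =>
    degree_pos' G hconn (by rw [hcard]; omega) v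
  have hsum : ∑ v, G.degree v = 2 * n := by
    rw [G.sum_degrees_eq_twice_card_edges, huni]
  obtain ⟨u, -, hu⟩ := Finset.exists_max_image (univ : Finset V) (fun v => G.degree v)
    (univ_nonempty_iff.mpr (Fintype.card_pos_iff.mp (by rw [hcard]; omega)))
  set D := G.degree u with hD
  have hDlt : D ≤ n - 1 := by
    have := G.degree_lt_card_verts u
    omega
  by_cases hDeq : D = n - 1
  · exact Or.inl ⟨u, hDeq⟩
  right
  have hD2 : 2 ≤ D := by
    by_contra h
    have : ∑ v, G.degree v ≤ ∑ _v : V, 1 := Finset.sum_le_sum fun v _ => by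
      have := hu v (mem_univ v); omega
    simp [hcard] at this
    omega
  have hsplit : D + ∑ v ∈ univ.erase u, G.degree v = 2 * n := by
    rw [hD]
    exact (Finset.add_sum_erase _ (fun v => G.degree v) (mem_univ u)).trans hsum
  have hM1 : M1 G = D ^ 2 + ∑ v ∈ univ.erase u, G.degree v ^ 2 := by
    rw [hD, M1]
    exact (Finset.add_sum_erase _ (fun v => G.degree v ^ 2) (mem_univ u)).symm
  by_cases hD3 : D = 2
  · -- all degrees ≤ 2
    have hall : ∀ v : V, G.degree v ≤ 2 := fun v => by
      have := hu v (mem_univ v); omega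
    have hle : M1 G ≤ 2 * (2 * n) := by
      rw [M1, ← hsum, Finset.mul_sum]
      exact Finset.sum_le_sum fun v _ => by
        have h1 := hall v; nlinarith [hdeg1 v]
    have hn4 : 4 ≤ n := by omega
    obtain ⟨m, rfl⟩ : ∃ m, n = m + 4 := ⟨n - 4, by omega⟩
    have e : (m+4)^2 = m*m + 8*m + 16 := by ring
    rw [e]
    have : m*m ≥ 0 := Nat.zero_le _
    omega
  -- now 3 ≤ D, D ≤ n - 2
  have hD3' : 3 ≤ D := by omega
  set b := n - D with hb
  have hbD : b + D = n := by omega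
  have hb2 : 2 ≤ b := by omega
  have hbn : b + 3 ≤ n := by omega
  have hFcard : (G.edgeFinset.filter (fun e => u ∉ e)).card = b := by
    have := hedges_card' G u
    omega
  have hkey : ∀ v ∈ univ.erase u, G.degree v ≤ b + 1 := fun v hv => by
    have := hedges_bound G u (mem_erase.mp hv).1
    omega
  have hQ : (∑ v ∈ univ.erase u, G.degree v ^ 2) + (n-1) * (b+1)
      ≤ (b+2) * (∑ v ∈ univ.erase u, G.degree v) := by
    have hcarde : (univ.erase u).card = n - 1 := by
      rw [card_erase_of_mem (mem_univ u), card_univ, hcard]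
    calc (∑ v ∈ univ.erase u, G.degree v ^ 2) + (n-1) * (b+1)
        = ∑ v ∈ univ.erase u, (G.degree v ^ 2 + (b+1)) := by
          rw [Finset.sum_add_distrib, Finset.sum_const, hcarde, smul_eq_mul]
      _ ≤ ∑ v ∈ univ.erase u, (b+2) * G.degree v := Finset.sum_le_sum fun v hv => by
          have h1 := hdeg1 v
          have h2 := hkey v hv
          nlinarith
      _ = (b+2) * (∑ v ∈ univ.erase u, G.degree v) := by rw [Finset.mul_sum]
  -- final arithmetic
  set S := ∑ v ∈ univ.erase u, G.degree v with hS
  set Q := ∑ v ∈ univ.erase u, G.degree v ^ 2 with hQdef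
  obtain ⟨m, rfl⟩ : ∃ m, n = m + 3 := ⟨n - 3, by omega⟩
  have hR : (m+3)^2 - (m+3) + 6 = m*m + 5*m + 12 := by
    have e : (m+3)^2 = m*m+6*m+9 := by ring
    rw [e]
    have : 0 ≤ m*m := Nat.zero_le _
    omega
  rw [hM1, hR]
  have hbm : b ≤ m := by omega
  have hDval : D + b = m + 3 := by omega
  have hSval : D + S = 2*m + 6 := by omega
  have hQ' : Q + (m+2) * (b+1) ≤ (b+2) * S := by
    have : (m+3:ℕ) - 1 = m + 2 := by omega
    rw [this] at hQ
    exact hQ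
  nlinarith [hQ', hb2, hbm, hDval, hSval, sq_nonneg (D - b), Nat.zero_le (b*(m-b))]

end ZagrebAux

theorem stmt5 {V : Type*} [Fintype V] {n : ℕ} (hn : 3 ≤ n) (hcard : Fintype.card V = n)
    (G : SimpleGraph V) (hconn : G.Connected) (huni : G.edgeFinset.card = n) :
    M1 G ≤ M1 (Un3 n) ∧ M1 (Un3 n) = n ^ 2 - n + 6 ∧
      (M1 G = M1 (Un3 n) ↔ Nonempty (G ≃g Un3 n)) := by
  have hM1Un3 : M1 (Un3 n) = n ^ 2 - n + 6 := M1_un3 hn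
  have main := main_bound G hn hcard hconn huni
  refine ⟨?_, hM1Un3, ?_, ?_⟩
  · rcases main with ⟨u, hu⟩ | hlt
    · obtain ⟨f⟩ := iso_of_max_degree G hn hcard huni u hu
      rw [M1_iso f]
    · rw [hM1Un3]; exact hlt.le
  · intro heq
    rcases main with ⟨u, hu⟩ | hlt
    · exact iso_of_max_degree G hn hcard huni u hu
    · rw [hM1Un3] at heq; omega
  · rintro ⟨f⟩; exact M1_iso f
end

section
/- For n ≥ p + 3, the graph U_{n−p}^3 + K_p has the maximum first Zagreb index M_1 among all p-quasi unicyclic graphs on n vertices (connected graphs G where some p-set S has G − S unicyclic, and p is minimal with this property). -/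
open scoped Classical
open Finset in
lemma pair_deg {V : Type*} [Fintype V] [DecidableEq V] (H : SimpleGraph V)
    [DecidableRel H.Adj] {u v : V} (huv : u ≠ v) :
    H.degree u + H.degree v ≤ H.edgeFinset.card + 1 := by
  have hsub : H.incidenceFinset u ∪ H.incidenceFinset v ⊆ H.edgeFinset := by
    intro e he
    rcases Finset.mem_union.mp he with h | h <;>
      simp [SimpleGraph.mem_incidenceFinset, SimpleGraph.incidenceSet] at h <;>
      simp [SimpleGraph.mem_edgeFinset, h.1]
  have hint : (H.incidenceFinset u ∩ H.incidenceFinset v) ⊆ {s(u, v)} := by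
    intro e he
    rcases Finset.mem_inter.mp he with ⟨h1, h2⟩
    simp [SimpleGraph.mem_incidenceFinset, SimpleGraph.incidenceSet] at h1 h2
    simp [Finset.mem_singleton]
    exact (Sym2.mem_and_mem_iff huv).mp ⟨h1.2, h2.2⟩
  have := Finset.card_union_add_card_inter (H.incidenceFinset u) (H.incidenceFinset v)
  have h1 := Finset.card_le_card hsub
  have h2 := Finset.card_le_card hint
  simp at h2
  rw [SimpleGraph.card_incidenceFinset_eq_degree, SimpleGraph.card_incidenceFinset_eq_degree] at this
  omega

open Finset in
lemma deg_pos {V : Type*} [Fintype V] (H : SimpleGraph V) [DecidableRel H.Adj]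
    (hconn : H.Connected) (h2 : 2 ≤ Fintype.card V) (v : V) : 1 ≤ H.degree v := by
  obtain ⟨w, hw⟩ : ∃ w, w ≠ v := Fintype.exists_ne_of_one_lt_card h2 v
  obtain ⟨walk⟩ := hconn.preconnected v w
  cases walk with
  | nil => exact absurd rfl hw.symm
  | cons h _ =>
    exact (SimpleGraph.degree_pos_iff_exists_adj H v).mpr ⟨_, h⟩

lemma arith (k a b c : ℕ) (h1 : 1 ≤ a) (h2 : a ≤ k+1) (hb : b ≤ a)
    (hbc : a + b ≤ k + 2) (hc : a + c = k + 3) :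
    a^2 + b*c ≤ (k+1)^2 + 2 := by
  rcases Nat.lt_or_ge a 2 with h | h
  · interval_cases a
    · nlinarith
  · nlinarith [Nat.mul_le_mul (Nat.le_refl 1) hb]

open Finset in
lemma sumsq_bound {k : ℕ} {V : Type*} [Fintype V] (e : V → ℕ)
    (hcard : Fintype.card V = k + 3)
    (hsum : ∑ v, e v = k + 3)
    (hle : ∀ v, e v ≤ k + 1)
    (hpair : ∀ u v, u ≠ v → e u + e v ≤ k + 2) :
    ∑ v, (e v)^2 ≤ (k+1)^2 + 2 := by
  have hne : (univ : Finset V).Nonempty := by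
    rw [← Finset.card_pos, Finset.card_univ, hcard]; omega
  obtain ⟨u, _, hu⟩ := Finset.exists_max_image univ e hne
  have hane : (univ.erase u).Nonempty := by
    rw [← Finset.card_pos, Finset.card_erase_of_mem (mem_univ u), Finset.card_univ, hcard]
    omega
  obtain ⟨w, hwmem, hw⟩ := Finset.exists_max_image (univ.erase u) e hane
  have hwu : w ≠ u := (Finset.mem_erase.mp hwmem).1
  set a := e u with ha
  set b := e w with hb
  have hba : b ≤ a := hu w (mem_univ w)
  have ha1 : 1 ≤ a := by
    by_contra h
    push_neg at h
    have : ∀ v, e v = 0 := fun v => by have := hu v (mem_univ v); omega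
    have : ∑ v, e v = 0 := Finset.sum_eq_zero fun v _ => this v
    omega
  have hak : a ≤ k + 1 := hle u
  have habk : a + b ≤ k + 2 := by
    have := hpair u w (Ne.symm hwu); omega
  have hsplit : ∑ v, (e v)^2 = a^2 + ∑ v ∈ univ.erase u, (e v)^2 := by
    rw [← Finset.add_sum_erase _ _ (mem_univ u)]
  have hsplit2 : ∑ v, e v = a + ∑ v ∈ univ.erase u, e v := by
    rw [← Finset.add_sum_erase _ _ (mem_univ u)]
  set c := ∑ v ∈ univ.erase u, e v with hc
  have hrest : ∑ v ∈ univ.erase u, (e v)^2 ≤ b * c := by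
    rw [hc, Finset.mul_sum]
    apply Finset.sum_le_sum
    intro v hv
    have : e v ≤ b := hw v hv
    calc (e v)^2 = e v * e v := sq (e v) ▸ (pow_two (e v))
    _ ≤ b * e v := Nat.mul_le_mul_right _ this
  have hac : a + c = k + 3 := by omega
  calc ∑ v, (e v)^2 = a^2 + ∑ v ∈ univ.erase u, (e v)^2 := hsplit
    _ ≤ a^2 + b * c := by omega
    _ ≤ (k+1)^2 + 2 := arith k a b c ha1 hak hba habk hac

open Finset in
lemma key {k p : ℕ} {V : Type*} [Fintype V] [DecidableEq V] (H : SimpleGraph V)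
    [DecidableRel H.Adj] (hcard : Fintype.card V = k + 3)
    (hconn : H.Connected) (hedge : H.edgeFinset.card = k + 3) :
    ∑ v, (H.degree v + p)^2 ≤ (k+2+p)^2 + 2*(p+2)^2 + k*(p+1)^2 := by
  have hd1 : ∀ v, 1 ≤ H.degree v := deg_pos H hconn (by omega)
  have hdm : ∀ v, H.degree v ≤ k + 2 := by
    intro v
    have := H.degree_lt_card_verts v
    omega
  have hsum : ∑ v, H.degree v = 2 * (k + 3) := by
    rw [SimpleGraph.sum_degrees_eq_twice_card_edges, hedge]
  set e : V → ℕ := fun v => H.degree v - 1 with he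
  have hde : ∀ v, H.degree v = e v + 1 := fun v => by
    have := hd1 v; simp [he]; omega
  have hesum : ∑ v, e v = k + 3 := by
    have h1 : ∑ v, H.degree v = ∑ v, (e v + 1) := Finset.sum_congr rfl fun v _ => hde v
    have h2 : ∑ v : V, (e v + 1) = (∑ v, e v) + Fintype.card V := by
      simp [Finset.sum_add_distrib, Finset.card_univ]
    have : ∑ v, H.degree v = (∑ v, e v) + Fintype.card V := by rw [h1, h2]
    omega
  have hB : ∑ v, (e v)^2 ≤ (k+1)^2 + 2 := by
    apply sumsq_bound e hcard hesum
    · intro v; have := hdm v; have := hd1 v; simp [he]; omega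
    · intro u v huv
      have := pair_deg H huv
      have h1 := hd1 u; have h2 := hd1 v
      simp [he]; omega
  have hrw : ∀ v, (H.degree v + p)^2 = (e v)^2 + (2*(p+1)) * e v + (p+1)^2 := by
    intro v; rw [hde v]; ring
  calc ∑ v, (H.degree v + p)^2
      = ∑ v, (e v)^2 + (2*(p+1)) * ∑ v, e v + Fintype.card V * (p+1)^2 := by
        rw [← Finset.card_univ]
        simp only [hrw, Finset.sum_add_distrib, Finset.mul_sum, Finset.sum_const, smul_eq_mul]
    _ = ∑ v, (e v)^2 + (2*(p+1)) * (k+3) + (k+3) * (p+1)^2 := by rw [hesum, hcard]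
    _ ≤ (k+1)^2 + 2 + (2*(p+1)) * (k+3) + (k+3) * (p+1)^2 := by omega
    _ = (k+2+p)^2 + 2*(p+2)^2 + k*(p+1)^2 := by ring

open Finset in
lemma card_filter_sum {α β : Type*} [Fintype α] [Fintype β] (P : α ⊕ β → Prop)
    [DecidablePred P] :
    (univ.filter P).card
      = (univ.filter (fun a => P (Sum.inl a))).card
        + (univ.filter (fun b => P (Sum.inr b))).card := by
  simp only [Finset.card_filter]
  rw [Fintype.sum_sum_type]

open Finset in
lemma degJ_inl {α β : Type*} [Fintype α] [Fintype β] (G : SimpleGraph α)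
    (H : SimpleGraph β) (a : α) :
    (joinG G H).degree (Sum.inl a) = G.degree a + Fintype.card β := by
  classical
  rw [← SimpleGraph.card_neighborFinset_eq_degree, SimpleGraph.neighborFinset_eq_filter,
    card_filter_sum]
  congr 1
  · rw [← SimpleGraph.card_neighborFinset_eq_degree, SimpleGraph.neighborFinset_eq_filter]
    exact Finset.card_bij (fun x _ => x) (fun x hx => by
        simp only [Finset.mem_filter, Finset.mem_univ, true_and] at hx ⊢; exact hx)
      (fun _ _ _ _ h => h) (fun x hx => ⟨x, by
        simp only [Finset.mem_filter, Finset.mem_univ, true_and] at hx ⊢; exact hx, rfl⟩)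
  · rw [Finset.filter_true_of_mem (p := fun b => (joinG G H).Adj (Sum.inl a) (Sum.inr b))
      (fun _ _ => trivial), Finset.card_univ]

open Finset in
lemma degJ_inr {α β : Type*} [Fintype α] [Fintype β] (G : SimpleGraph α)
    (H : SimpleGraph β) (b : β) :
    (joinG G H).degree (Sum.inr b) = H.degree b + Fintype.card α := by
  classical
  rw [← SimpleGraph.card_neighborFinset_eq_degree, SimpleGraph.neighborFinset_eq_filter,
    card_filter_sum]
  rw [Nat.add_comm]
  congr 1
  · rw [← SimpleGraph.card_neighborFinset_eq_degree, SimpleGraph.neighborFinset_eq_filter]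
    exact Finset.card_bij (fun x _ => x) (fun x hx => by
        simp only [Finset.mem_filter, Finset.mem_univ, true_and] at hx ⊢; exact hx)
      (fun _ _ _ _ h => h) (fun x hx => ⟨x, by
        simp only [Finset.mem_filter, Finset.mem_univ, true_and] at hx ⊢; exact hx, rfl⟩)
  · rw [Finset.filter_true_of_mem (p := fun a => (joinG G H).Adj (Sum.inr b) (Sum.inl a))
      (fun _ _ => trivial), Finset.card_univ]

open Finset in
lemma dUn3_val (k : ℕ) (a : Fin (k+3)) :
    (Un3 (k+3)).degree a =
      if a.val = 0 then k+2 else if a.val ≤ 2 then 2 else 1 := by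
  rw [← SimpleGraph.card_neighborFinset_eq_degree, SimpleGraph.neighborFinset_eq_filter]
  rcases Nat.lt_or_ge a.val 1 with h0 | h0
  · have ha : a.val = 0 := by omega
    rw [if_pos ha]
    have : univ.filter (fun w => (Un3 (k+3)).Adj a w) = univ.erase a := by
      ext x
      simp only [Finset.mem_filter, Finset.mem_univ, true_and, Finset.mem_erase, and_true,
        Un3, ne_eq, Fin.ext_iff]
      omega
    rw [this, Finset.card_erase_of_mem (Finset.mem_univ a), Finset.card_univ]
    simp
  · rcases Nat.lt_or_ge a.val 3 with h2 | h2
    · have ha0 : ¬ a.val = 0 := by omega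
      rw [if_neg ha0, if_pos (by omega)]
      rcases Nat.lt_or_ge a.val 2 with h1 | h1
      · have ha : a.val = 1 := by omega
        have : univ.filter (fun w => (Un3 (k+3)).Adj a w)
            = {(⟨0, by omega⟩ : Fin (k+3)), ⟨2, by omega⟩} := by
          ext x
          simp only [Finset.mem_filter, Finset.mem_univ, true_and, Finset.mem_insert,
            Finset.mem_singleton, Un3, ne_eq, Fin.ext_iff, ha]
          omega
        rw [this]
        rw [Finset.card_insert_of_notMem (by simp [Fin.ext_iff]), Finset.card_singleton]
      · have ha : a.val = 2 := by omega
        have : univ.filter (fun w => (Un3 (k+3)).Adj a w)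
            = {(⟨0, by omega⟩ : Fin (k+3)), ⟨1, by omega⟩} := by
          ext x
          simp only [Finset.mem_filter, Finset.mem_univ, true_and, Finset.mem_insert,
            Finset.mem_singleton, Un3, ne_eq, Fin.ext_iff, ha]
          omega
        rw [this]
        rw [Finset.card_insert_of_notMem (by simp [Fin.ext_iff]), Finset.card_singleton]
    · rw [if_neg (by omega), if_neg (by omega)]
      have : univ.filter (fun w => (Un3 (k+3)).Adj a w) = {(⟨0, by omega⟩ : Fin (k+3))} := by
        ext x
        simp only [Finset.mem_filter, Finset.mem_univ, true_and,
          Finset.mem_singleton, Un3, ne_eq, Fin.ext_iff]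
        omega
      rw [this, Finset.card_singleton]

open Finset in
lemma sum_fin_split (k : ℕ) (g : Fin (k+3) → ℕ) (A B C : ℕ)
    (hg : ∀ a : Fin (k+3), g a = if a.val = 0 then A else if a.val ≤ 2 then B else C) :
    ∑ a, g a = A + 2*B + k*C := by
  have h1 : univ.filter (fun a : Fin (k+3) => a.val ≤ 2)
      = {(⟨0, by omega⟩ : Fin (k+3)), ⟨1, by omega⟩, ⟨2, by omega⟩} := by
    ext x
    simp only [Finset.mem_filter, Finset.mem_univ, true_and, Finset.mem_insert,
      Finset.mem_singleton, Fin.ext_iff]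
    omega
  have hcard3 : (univ.filter (fun a : Fin (k+3) => a.val ≤ 2)).card = 3 := by
    rw [h1]
    rw [Finset.card_insert_of_notMem (by simp [Fin.ext_iff]),
      Finset.card_insert_of_notMem (by simp [Fin.ext_iff]), Finset.card_singleton]
  have hcardk : (univ.filter (fun a : Fin (k+3) => ¬ a.val ≤ 2)).card = k := by
    have := Finset.card_filter_add_card_filter_not
      (s := (univ : Finset (Fin (k+3)))) (p := fun a => a.val ≤ 2)
    rw [Finset.card_univ] at this
    simp only [Fintype.card_fin] at this
    omega
  rw [← Finset.sum_filter_add_sum_filter_not univ (fun a : Fin (k+3) => a.val ≤ 2)]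
  have e1 : ∑ a ∈ univ.filter (fun a : Fin (k+3) => a.val ≤ 2), g a = A + 2*B := by
    rw [h1]
    rw [Finset.sum_insert (by simp [Fin.ext_iff]), Finset.sum_insert (by simp [Fin.ext_iff]),
      Finset.sum_singleton]
    rw [hg, hg, hg]
    norm_num
    ring
  have e2 : ∑ a ∈ univ.filter (fun a : Fin (k+3) => ¬ a.val ≤ 2), g a = k*C := by
    calc ∑ a ∈ univ.filter (fun a : Fin (k+3) => ¬ a.val ≤ 2), g a
        = ∑ _a ∈ univ.filter (fun a : Fin (k+3) => ¬ a.val ≤ 2), C := by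
          refine Finset.sum_congr rfl (fun a ha => ?_)
          rw [hg a]
          simp only [Finset.mem_filter] at ha
          rw [if_neg (by omega), if_neg ha.2]
      _ = k*C := by rw [Finset.sum_const, hcardk, smul_eq_mul]
  rw [e1, e2]

open Finset in
lemma M1_rhs (k p : ℕ) :
    M1 (joinG (Un3 (k+3)) (SimpleGraph.completeGraph (Fin p)))
      = (k+2+p)^2 + 2*(p+2)^2 + k*(p+1)^2 + p*(k+2+p)^2 := by
  rw [M1]
  rw [Fintype.sum_sum_type]
  have hinr : ∀ b : Fin p, (joinG (Un3 (k+3)) (SimpleGraph.completeGraph (Fin p))).degree (Sum.inr b)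
      = k+2+p := by
    intro b
    rw [degJ_inr]
    have : (SimpleGraph.completeGraph (Fin p)).degree b = p - 1 := by
      rw [← SimpleGraph.card_neighborFinset_eq_degree, SimpleGraph.neighborFinset_eq_filter]
      have : univ.filter (fun w => (SimpleGraph.completeGraph (Fin p)).Adj b w) = univ.erase b := by
        ext x
        simp [SimpleGraph.completeGraph, eq_comm]
      rw [this, Finset.card_erase_of_mem (Finset.mem_univ b), Finset.card_univ, Fintype.card_fin]
    rw [Fintype.card_fin]
    have hp : 1 ≤ p := b.pos
    have e : ∀ inst, @SimpleGraph.degree _ (SimpleGraph.completeGraph (Fin p)) b inst = p - 1 :=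
      fun inst => by convert this
    rw [e]
    omega
  have hinl : ∀ a : Fin (k+3), (joinG (Un3 (k+3)) (SimpleGraph.completeGraph (Fin p))).degree (Sum.inl a)
      = (Un3 (k+3)).degree a + p := by
    intro a; rw [degJ_inl, Fintype.card_fin]
  have e2 : ∑ b : Fin p,
      (joinG (Un3 (k+3)) (SimpleGraph.completeGraph (Fin p))).degree (Sum.inr b) ^ 2 = p*(k+2+p)^2 := by
    rw [Finset.sum_congr rfl (fun b _ => by rw [hinr b]), Finset.sum_const, Finset.card_univ,
      Fintype.card_fin, smul_eq_mul]
  have e1 : ∑ a : Fin (k+3),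
      (joinG (Un3 (k+3)) (SimpleGraph.completeGraph (Fin p))).degree (Sum.inl a) ^ 2
      = (k+2+p)^2 + 2*(p+2)^2 + k*(p+1)^2 := by
    apply sum_fin_split k _ ((k+2+p)^2) ((p+2)^2) ((p+1)^2)
    intro a
    rw [hinl a, dUn3_val]
    split_ifs with h1 h2 <;> ring
  rw [e1, e2]

set_option maxHeartbeats 1000000 in
theorem stmt13 {n p : ℕ} (hn : p + 3 ≤ n) (G : SimpleGraph (Fin n))
    (hG : QuasiKCyclic 1 p G) :
    M1 G ≤ M1 (joinG (Un3 (n - p)) (SimpleGraph.completeGraph (Fin p))) := by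
  obtain ⟨hconn, ⟨S, hScard, hIsK⟩, -⟩ := hG
  obtain ⟨k, hk⟩ : ∃ k, n = p + (k + 3) := ⟨n - p - 3, by omega⟩
  have hnp : n - p = k + 3 := by omega
  rw [hnp, M1_rhs k p]
  -- facts about the deleted graph
  have hcardset0 : Fintype.card ↥((↑S : Set (Fin n))ᶜ) = k + 3 := by
    rw [Fintype.card_compl_set]
    have h1 : Fintype.card ↥(↑S : Set (Fin n)) = S.card := by
      rw [← Set.toFinset_card, Finset.toFinset_coe]
    rw [h1, Fintype.card_fin, hScard]
    omega
  have hcardset : ∀ (inst : Fintype ↥((↑S : Set (Fin n))ᶜ)),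
      @Fintype.card _ inst = k + 3 := by
    intro inst
    exact (congrArg (fun i : Fintype ↥((↑S : Set (Fin n))ᶜ) => @Fintype.card _ i)
      (Subsingleton.elim inst _)).trans hcardset0
  obtain ⟨hHconn, hHcount⟩ := hIsK
  have hedge : (deleteS G S).edgeFinset.card = k + 3 := by
    rw [hcardset _] at hHcount
    have h3 := Nat.add_right_cancel hHcount
    exact (congrArg (fun i : Fintype ((deleteS G S).edgeSet) =>
      (@SimpleGraph.edgeFinset _ (deleteS G S) i).card) (Subsingleton.elim _ _)).trans h3
  have hkey : ∑ v : ↥((↑S : Set (Fin n))ᶜ), ((deleteS G S).degree v + p)^2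
      ≤ (k+2+p)^2 + 2*(p+2)^2 + k*(p+1)^2 :=
    key (deleteS G S) (hcardset _) hHconn hedge
  -- degree bound outside S
  have hdegle : ∀ v : ↥((↑S : Set (Fin n))ᶜ),
      G.degree ↑v ≤ (deleteS G S).degree v + p := by
    intro v
    rw [← SimpleGraph.card_neighborFinset_eq_degree,
      ← SimpleGraph.card_neighborFinset_eq_degree]
    have hsub : G.neighborFinset ↑v ⊆
        ((deleteS G S).neighborFinset v).image Subtype.val ∪ S := by
      intro w hw
      rw [SimpleGraph.mem_neighborFinset] at hw
      by_cases hwS : w ∈ S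
      · exact Finset.mem_union_right _ hwS
      · apply Finset.mem_union_left
        have hwmem : w ∈ ((↑S : Set (Fin n))ᶜ) := by
          simp [Set.mem_compl_iff, hwS]
        refine Finset.mem_image.mpr ⟨⟨w, hwmem⟩, ?_, rfl⟩
        rw [SimpleGraph.mem_neighborFinset]
        exact hw
    calc (G.neighborFinset ↑v).card
        ≤ (((deleteS G S).neighborFinset v).image Subtype.val ∪ S).card :=
          Finset.card_le_card hsub
      _ ≤ (((deleteS G S).neighborFinset v).image Subtype.val).card + S.card :=
          Finset.card_union_le _ _
      _ ≤ ((deleteS G S).neighborFinset v).card + p := by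
          rw [hScard]
          exact Nat.add_le_add_right (Finset.card_image_le) p
  -- split M1 G
  have hsplit : M1 G = (∑ v ∈ S, G.degree v ^ 2) + ∑ v ∈ Sᶜ, G.degree v ^ 2 := by
    rw [M1, Finset.sum_add_sum_compl]
  have hS_le : ∑ v ∈ S, G.degree v ^ 2 ≤ p * (k+2+p)^2 := by
    calc ∑ v ∈ S, G.degree v ^ 2 ≤ ∑ _v ∈ S, (k+2+p)^2 := by
          apply Finset.sum_le_sum
          intro v _
          apply Nat.pow_le_pow_left
          have := G.degree_lt_card_verts v
          rw [Fintype.card_fin] at this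
          omega
      _ = p * (k+2+p)^2 := by rw [Finset.sum_const, hScard, smul_eq_mul]
  have hcompl_eq : ∑ v ∈ Sᶜ, G.degree v ^ 2
      = ∑ v : ↥((↑S : Set (Fin n))ᶜ), G.degree ↑v ^ 2 := by
    apply Finset.sum_subtype
    intro x
    simp [Set.mem_compl_iff]
  have hcompl_le : ∑ v : ↥((↑S : Set (Fin n))ᶜ), G.degree ↑v ^ 2
      ≤ (k+2+p)^2 + 2*(p+2)^2 + k*(p+1)^2 := by
    calc ∑ v : ↥((↑S : Set (Fin n))ᶜ), G.degree ↑v ^ 2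
        ≤ ∑ v : ↥((↑S : Set (Fin n))ᶜ), ((deleteS G S).degree v + p)^2 := by
          apply Finset.sum_le_sum
          intro v _
          exact Nat.pow_le_pow_left (hdegle v) 2
      _ ≤ (k+2+p)^2 + 2*(p+2)^2 + k*(p+1)^2 := hkey
  omega
end
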